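/- For any h, a ∈ ℂ^L with a ≠ 0 and P > 0, one has log((‖a‖² − P·|h* a|²/(1 + P·‖h‖²))⁻¹) ≤ log((1 + P·‖h‖²)/‖a‖²). In particular, if ‖a‖² ≥ 1 + P·‖h‖², then ‖a‖² − P·|h* a|²/(1 + P·‖h‖²) ≥ 1, so the computation rate log((‖a‖² − P·|h* a|²/(1 + P·‖h‖²))⁻¹) is nonpositive. -/

import Mathlib

/-- Lemma 2: upper bound on the computation rate, and nonpositivity when
`‖a‖² ≥ 1 + P‖h‖²`. -/
theorem stmt_1 {L : ℕ} (h a : EuclideanSpace ℂ (Fin L)) (ha : a ≠ 0) (P : ℝ) (hP : 0 < P) :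
    Real.log ((‖a‖ ^ 2 - P * ‖(inner ℂ h a : ℂ)‖ ^ 2 / (1 + P * ‖h‖ ^ 2))⁻¹)
        ≤ Real.log ((1 + P * ‖h‖ ^ 2) / ‖a‖ ^ 2) ∧
      (1 + P * ‖h‖ ^ 2 ≤ ‖a‖ ^ 2 →
        1 ≤ ‖a‖ ^ 2 - P * ‖(inner ℂ h a : ℂ)‖ ^ 2 / (1 + P * ‖h‖ ^ 2) ∧
        Real.log ((‖a‖ ^ 2 - P * ‖(inner ℂ h a : ℂ)‖ ^ 2 / (1 + P * ‖h‖ ^ 2))⁻¹) ≤ 0) := by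
  set D := 1 + P * ‖h‖ ^ 2 with hDdef
  have hD : 0 < D := by positivity
  have ha2 : 0 < ‖a‖ ^ 2 := by
    have : 0 < ‖a‖ := norm_pos_iff.mpr ha
    positivity
  have hCS : ‖(inner ℂ h a : ℂ)‖ ^ 2 ≤ ‖h‖ ^ 2 * ‖a‖ ^ 2 := by
    have := norm_inner_le_norm (𝕜 := ℂ) h a
    calc ‖(inner ℂ h a : ℂ)‖ ^ 2 ≤ (‖h‖ * ‖a‖) ^ 2 := by
          apply pow_le_pow_left₀ (norm_nonneg _) this
      _ = ‖h‖ ^ 2 * ‖a‖ ^ 2 := by ring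
  set x := ‖a‖ ^ 2 - P * ‖(inner ℂ h a : ℂ)‖ ^ 2 / D with hxdef
  have hx : ‖a‖ ^ 2 / D ≤ x := by
    rw [hxdef, div_le_iff₀ hD, sub_mul, div_mul_cancel₀ _ hD.ne']
    have hm := mul_le_mul_of_nonneg_left hCS hP.le
    rw [hDdef]
    nlinarith
  have hxpos : 0 < x := lt_of_lt_of_le (by positivity) hx
  have hinv : x⁻¹ ≤ D / ‖a‖ ^ 2 := by
    rw [← inv_div]
    exact (inv_le_inv₀ hxpos (by positivity)).mpr hx
  constructor
  · exact Real.log_le_log (by positivity) hinv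
  · intro hle
    have h1 : 1 ≤ x := le_trans (by rw [le_div_iff₀ hD]; linarith) hx
    refine ⟨h1, Real.log_nonpos (by positivity) ?_⟩
    exact inv_le_one_of_one_le₀ h1
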